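/- arXiv:2109.04807 — 2 statements merged into one kernel-verified Lean document; each statement's English description precedes it below -/
import Mathlib

section
/- Let K, α, t be integers with 2 ≤ α ≤ K - 1 and 0 ≤ t ≤ α - 1. Then (C(α, t+1) + (K - α)·C(α-1, t)) / C(α, t) · C(K, t) / C(K, t+1) = 1 + t(K - α)(α - 1 - t) / (α(K - t)), as an identity of rational numbers. -/
/-- Ratio of the selfish converse bound to the MAN load. -/
theorem selfish_over_man_ratio (K α t : ℕ) (hα : 2 ≤ α) (hK : α ≤ K - 1)
    (ht : t ≤ α - 1) :
    (((α.choose (t + 1) : ℚ) + ((K : ℚ) - α) * ((α - 1).choose t : ℚ)) / (α.choose t : ℚ))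
      * ((K.choose t : ℚ) / (K.choose (t + 1) : ℚ))
    = 1 + ((t : ℚ) * ((K : ℚ) - α) * ((α : ℚ) - 1 - t)) / ((α : ℚ) * ((K : ℚ) - t)) := by
  have hα1 : 1 ≤ α := le_trans (by norm_num) hα
  have hαt : t < α := lt_of_le_of_lt ht (Nat.sub_lt (by omega) one_pos)
  have hKα : α < K := by omega
  have hKt : t < K := lt_trans hαt hKα
  have hA : (0:ℚ) < (α.choose t : ℚ) := by
    exact_mod_cast Nat.choose_pos hαt.le
  have hB : (0:ℚ) < (K.choose t : ℚ) := by
    exact_mod_cast Nat.choose_pos hKt.le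
  have ht1 : ((t:ℚ) + 1) ≠ 0 := by positivity
  have hαQ : (α:ℚ) ≠ 0 := by positivity
  have hKtQ : (K:ℚ) - t ≠ 0 := by
    have : (t:ℚ) < K := by exact_mod_cast hKt
    linarith
  have hαtQ : (α:ℚ) - t ≠ 0 := by
    have : (t:ℚ) < α := by exact_mod_cast hαt
    linarith
  -- key identities
  have h1 : (α.choose (t+1) : ℚ) * ((t:ℚ)+1) = (α.choose t : ℚ) * ((α:ℚ) - t) := by
    have h := congrArg (Nat.cast (R := ℚ)) (Nat.choose_succ_right_eq α t)
    push_cast [Nat.cast_sub hαt.le] at h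
    linarith [h]
  have h2 : (K.choose (t+1) : ℚ) * ((t:ℚ)+1) = (K.choose t : ℚ) * ((K:ℚ) - t) := by
    have h := congrArg (Nat.cast (R := ℚ)) (Nat.choose_succ_right_eq K t)
    push_cast [Nat.cast_sub hKt.le] at h
    linarith [h]
  have h3 : (α:ℚ) * ((α-1).choose t : ℚ) = (α.choose (t+1) : ℚ) * ((t:ℚ)+1) := by
    have h := congrArg (Nat.cast (R := ℚ)) (Nat.add_one_mul_choose_eq (α-1) t)
    rw [Nat.sub_add_cancel hα1] at h
    push_cast at h
    linarith [h]
  have e1 : (α.choose (t+1) : ℚ) = (α.choose t : ℚ) * ((α:ℚ) - t) / ((t:ℚ)+1) := by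
    rw [eq_div_iff ht1]; exact h1
  have e2 : (K.choose (t+1) : ℚ) = (K.choose t : ℚ) * ((K:ℚ) - t) / ((t:ℚ)+1) := by
    rw [eq_div_iff ht1]; exact h2
  have e3 : ((α-1).choose t : ℚ) = (α.choose t : ℚ) * ((α:ℚ) - t) / (α:ℚ) := by
    rw [eq_div_iff hαQ]
    have := h3.trans h1
    linarith [this]
  rw [e1, e2, e3]
  field_simp
  ring
end

section
/- Let K, α, t be integers with 2 ≤ α ≤ K - 1 and 0 ≤ t ≤ α - 1. Then the selfish converse load R_LB(t) = (C(α, t+1) + (K - α)·C(α-1, t))/C(α, t) is greater than or equal to the MAN load R_MAN(t) = C(K, t+1)/C(K, t), with strict inequality whenever 1 ≤ t ≤ α - 2. -/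
set_option maxHeartbeats 1000000 in
/-- The selfish converse load is at least the MAN load, strictly so for 1 ≤ t ≤ α - 2. -/
theorem selfish_ge_man (K α t : ℕ) (hα : 2 ≤ α) (hK : α ≤ K - 1) (ht : t ≤ α - 1) :
    (((α.choose (t + 1) : ℚ) + ((K : ℚ) - α) * ((α - 1).choose t : ℚ)) / (α.choose t : ℚ)
      ≥ (K.choose (t + 1) : ℚ) / (K.choose t : ℚ))
    ∧ (1 ≤ t → t ≤ α - 2 →
      ((α.choose (t + 1) : ℚ) + ((K : ℚ) - α) * ((α - 1).choose t : ℚ)) / (α.choose t : ℚ)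
        > (K.choose (t + 1) : ℚ) / (K.choose t : ℚ)) := by
  have htα : t + 1 ≤ α := by omega
  have hαK : α + 1 ≤ K := by omega
  have htK : t ≤ K := by omega
  have e1 : α.choose (t+1) * (t+1) = α.choose t * (α - t) := Nat.choose_succ_right_eq α t
  have e3 : K.choose (t+1) * (t+1) = K.choose t * (K - t) := Nat.choose_succ_right_eq K t
  have e2 : α * (α-1).choose t = α.choose t * (α - t) := by
    obtain ⟨m, rfl⟩ : ∃ m, α = m + 1 := ⟨α - 1, by omega⟩
    simp only [Nat.add_sub_cancel]
    calc (m+1) * m.choose t = (m+1).choose (t+1) * (t+1) := Nat.add_one_mul_choose_eq m t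
      _ = (m+1).choose t * (m+1-t) := Nat.choose_succ_right_eq (m+1) t
  have cast_sub1 : ((α - t : ℕ) : ℚ) = (α : ℚ) - t := by
    push_cast [Nat.cast_sub (by omega : t ≤ α)]; ring
  have cast_sub2 : ((K - t : ℕ) : ℚ) = (K : ℚ) - t := by
    push_cast [Nat.cast_sub htK]; ring
  have q1 : (α.choose (t+1) : ℚ) * (t+1) = (α.choose t : ℚ) * ((α:ℚ) - t) := by
    rw [← cast_sub1]; exact_mod_cast congrArg (Nat.cast : ℕ → ℚ) e1
  have q3 : (K.choose (t+1) : ℚ) * (t+1) = (K.choose t : ℚ) * ((K:ℚ) - t) := by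
    rw [← cast_sub2]; exact_mod_cast congrArg (Nat.cast : ℕ → ℚ) e3
  have q2 : (α:ℚ) * ((α-1).choose t : ℚ) = (α.choose t : ℚ) * ((α:ℚ) - t) := by
    rw [← cast_sub1]; exact_mod_cast congrArg (Nat.cast : ℕ → ℚ) e2
  have hCα : (0:ℚ) < α.choose t := by exact_mod_cast Nat.choose_pos (by omega : t ≤ α)
  have hCK : (0:ℚ) < K.choose t := by exact_mod_cast Nat.choose_pos htK
  have hαq : (0:ℚ) < (α:ℚ) := by exact_mod_cast (by omega : 0 < α)
  have hKα : (α:ℚ) + 1 ≤ K := by exact_mod_cast hαK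
  have htαq : (t:ℚ) + 1 ≤ α := by exact_mod_cast htα
  have htq : (0:ℚ) ≤ t := by positivity
  have hpos : (0:ℚ) < ((t:ℚ)+1) * α := by positivity
  have step : (K.choose (t+1) : ℚ) * (α.choose t) * (((t:ℚ)+1) * α)
      = ((α.choose t : ℚ) * (K.choose t)) * (((K:ℚ) - t) * α) := by
    linear_combination ((α.choose t : ℚ) * α) * q3
  have step2 : (((α.choose (t + 1) : ℚ) + ((K : ℚ) - α) * ((α - 1).choose t : ℚ))
        * (K.choose t)) * (((t:ℚ)+1) * α)
      = ((α.choose t : ℚ) * (K.choose t))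
        * (((α:ℚ) - t) * α + ((K:ℚ) - α) * ((α:ℚ) - t) * ((t:ℚ)+1)) := by
    linear_combination ((α:ℚ) * (K.choose t)) * q1
      + (((K:ℚ) - α) * ((t:ℚ)+1) * (K.choose t)) * q2
  constructor
  · rw [ge_iff_le, div_le_div_iff₀ hCK hCα]
    have scalar : ((K:ℚ) - t) * α ≤ ((α:ℚ) - t) * α + ((K:ℚ) - α) * ((α:ℚ) - t) * ((t:ℚ)+1) := by
      nlinarith [mul_nonneg (mul_nonneg (by linarith : (0:ℚ) ≤ (K:ℚ) - α) htq)
        (by linarith : (0:ℚ) ≤ (α:ℚ) - 1 - t)]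
    have h := mul_le_mul_of_nonneg_left scalar (mul_pos hCα hCK).le
    rw [← step, ← step2] at h
    exact le_of_mul_le_mul_right h hpos
  · intro ht1' ht2'
    have h1q : (1:ℚ) ≤ t := by exact_mod_cast ht1'
    have h2q : (t:ℚ) + 2 ≤ α := by exact_mod_cast (by omega : t + 2 ≤ α)
    rw [gt_iff_lt, div_lt_div_iff₀ hCK hCα]
    have p : (0:ℚ) < ((K:ℚ) - α) * (t:ℚ) * ((α:ℚ) - 1 - t) :=
      mul_pos (mul_pos (by linarith : (0:ℚ) < (K:ℚ) - α) (by linarith : (0:ℚ) < (t:ℚ)))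
        (by linarith : (0:ℚ) < (α:ℚ) - 1 - t)
    have scalar : ((K:ℚ) - t) * α < ((α:ℚ) - t) * α + ((K:ℚ) - α) * ((α:ℚ) - t) * ((t:ℚ)+1) := by
      nlinarith [p]
    have h := mul_lt_mul_of_pos_left scalar (mul_pos hCα hCK)
    rw [← step, ← step2] at h
    exact lt_of_mul_lt_mul_right h hpos.le
end
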